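/- A mass-action system G_k is dynamically equivalent to some reversible mass-action system if and only if it is dynamically equivalent to a reversible mass-action system G'_{k'} whose vertex set is contained in the set of source vertices of G. -/
import Mathlib


open Finset

noncomputable section
open scoped Classical

abbrev Vtx (n : ℕ) := Fin n → ℝ

/-- A reaction network: a finite set of directed edges between points of ℝⁿ. -/
abbrev Net (n : ℕ) := Finset (Vtx n × Vtx n)

variable {n : ℕ}

/-- The vertices of a network. -/
def verts (G : Net n) : Finset (Vtx n) := G.image Prod.fst ∪ G.image Prod.snd

/-- The source vertices of a network. -/
def sources (G : Net n) : Finset (Vtx n) := G.image Prod.fst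

/-- No self-loops. -/
def NoLoops (G : Net n) : Prop := ∀ e ∈ G, e.1 ≠ e.2

/-- `J` is a flux vector on `G`: positive on edges, zero on non-edges. -/
def IsFlux (G : Net n) (J : Vtx n × Vtx n → ℝ) : Prop :=
  (∀ e ∈ G, 0 < J e) ∧ ∀ e, e ∉ G → J e = 0

/-- Total outgoing flux at a vertex. -/
def outSum (G : Net n) (J : Vtx n × Vtx n → ℝ) (v : Vtx n) : ℝ :=
  ∑ e ∈ G.filter (fun e => e.1 = v), J e

/-- Total incoming flux at a vertex. -/
def inSum (G : Net n) (J : Vtx n × Vtx n → ℝ) (v : Vtx n) : ℝ :=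
  ∑ e ∈ G.filter (fun e => e.2 = v), J e

/-- Potential at a vertex: incoming minus outgoing flux (0 off the graph). -/
def potential (G : Net n) (J : Vtx n × Vtx n → ℝ) (v : Vtx n) : ℝ :=
  inSum G J v - outSum G J v

/-- Complex-balanced flux: in-flux equals out-flux at every vertex. -/
def ComplexBalanced (G : Net n) (J : Vtx n × Vtx n → ℝ) : Prop :=
  ∀ v ∈ verts G, inSum G J v = outSum G J v

/-- Detailed-balanced flux: every edge is reversible and paired fluxes agree. -/
def DetailedBalanced (G : Net n) (J : Vtx n × Vtx n → ℝ) : Prop :=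
  ∀ e ∈ G, (e.2, e.1) ∈ G ∧ J e = J (e.2, e.1)

/-- Steady state flux: flux-weighted reaction vectors sum to zero. -/
def SteadyFlux (G : Net n) (J : Vtx n × Vtx n → ℝ) : Prop :=
  ∑ e ∈ G, J e • (e.2 - e.1) = 0

/-- Flux-weighted sum of outgoing reaction vectors at a vertex. -/
def netOut (G : Net n) (J : Vtx n × Vtx n → ℝ) (v : Vtx n) : Vtx n :=
  ∑ e ∈ G.filter (fun e => e.1 = v), J e • (e.2 - e.1)

/-- Flux equivalence of two flux systems. -/
def FluxEquiv (G : Net n) (J : Vtx n × Vtx n → ℝ)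
    (G' : Net n) (J' : Vtx n × Vtx n → ℝ) : Prop :=
  ∀ v ∈ verts G ∪ verts G', netOut G J v = netOut G' J' v

/-- Reachability along directed edges. -/
def Reachable (G : Net n) : Vtx n → Vtx n → Prop :=
  Relation.ReflTransGen (fun a b => (a, b) ∈ G)

/-- Weak reversibility: every edge lies on a directed cycle. -/
def WeaklyReversible (G : Net n) : Prop := ∀ e ∈ G, Reachable G e.2 e.1

/-- Reversibility: every edge has its reverse in the network. -/
def Reversible (G : Net n) : Prop := ∀ e ∈ G, (e.2, e.1) ∈ G

/-- Positive state. -/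
def Pos (x : Vtx n) : Prop := ∀ i, 0 < x i

/-- Monomial `x^y = ∏ xᵢ^{yᵢ}` (real exponents). -/
def mono (x y : Vtx n) : ℝ := ∏ i, x i ^ y i

/-- `k` is a vector of rate constants on `G`: positive on edges, zero off. -/
def IsMAS (G : Net n) (k : Vtx n × Vtx n → ℝ) : Prop :=
  (∀ e ∈ G, 0 < k e) ∧ ∀ e, e ∉ G → k e = 0

/-- The mass-action vector field of `G_k`. -/
def maf (G : Net n) (k : Vtx n × Vtx n → ℝ) (x : Vtx n) : Vtx n :=
  ∑ e ∈ G, (k e * mono x e.1) • (e.2 - e.1)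

/-- Dynamical equivalence of mass-action systems. -/
def DynEquiv (G : Net n) (k : Vtx n × Vtx n → ℝ)
    (G' : Net n) (k' : Vtx n × Vtx n → ℝ) : Prop :=
  ∀ x : Vtx n, Pos x → maf G k x = maf G' k' x

/-- `x` is a complex-balanced steady state of `G_k`. -/
def CBsteady (G : Net n) (k : Vtx n × Vtx n → ℝ) (x : Vtx n) : Prop :=
  ∀ v ∈ verts G,
    (∑ e ∈ G.filter (fun e => e.1 = v), k e * mono x v)
      = ∑ e ∈ G.filter (fun e => e.2 = v), k e * mono x e.1

/-- The stoichiometric subspace of a network. -/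
def stoichSubspace (G : Net n) : Submodule ℝ (Vtx n) :=
  Submodule.span ℝ {d | ∃ e ∈ G, d = e.2 - e.1}

/-- Undirected connectivity relation of a network. -/
def connRel (G : Net n) : Vtx n → Vtx n → Prop :=
  Relation.ReflTransGen (fun a b => (a, b) ∈ G ∨ (b, a) ∈ G)

/-- The number of connected components of a network. -/
def numComponents (G : Net n) : ℕ :=
  ((verts G).image (fun v => (verts G).filter (fun w => connRel G v w))).card

/-- The deficiency of a network. -/
def deficiency (G : Net n) : ℤ :=
  (verts G).card - numComponents G - Module.finrank ℝ (stoichSubspace G)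


/-! ### Auxiliary lemmas -/

/-- The character `t ↦ exp (∑ i, t i * v i)` on the additive group `Vtx n`. -/
def chi (v : Vtx n) : Multiplicative (Vtx n) →* ℝ where
  toFun t := Real.exp (∑ i, (Multiplicative.toAdd t) i * v i)
  map_one' := by simp
  map_mul' s t := by
    show Real.exp (∑ i, (Multiplicative.toAdd (s * t)) i * v i) = _
    have h : ∑ i, (Multiplicative.toAdd (s * t)) i * v i
        = (∑ i, (Multiplicative.toAdd s) i * v i) + ∑ i, (Multiplicative.toAdd t) i * v i := by
      rw [← Finset.sum_add_distrib]
      refine Finset.sum_congr rfl fun i _ => ?_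
      show ((Multiplicative.toAdd s) i + (Multiplicative.toAdd t) i) * v i = _
      ring
    rw [h, Real.exp_add]

lemma chi_injective : Function.Injective (chi (n := n)) := by
  intro v w h
  funext i
  have := congrArg (fun f => f (Multiplicative.ofAdd (Pi.single i 1 : Vtx n))) h
  simp only [chi, MonoidHom.coe_mk, OneHom.coe_mk, toAdd_ofAdd] at this
  have hs : ∀ u : Vtx n, ∑ j, (Pi.single i 1 : Vtx n) j * u j = u i := by
    intro u
    rw [Finset.sum_eq_single i]
    · simp
    · intro j _ hj; simp [Pi.single_apply, hj]
    · intro h'; exact absurd (Finset.mem_univ i) h'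
  rw [hs, hs] at this
  exact Real.exp_injective this

lemma mono_eq_chi (t : Vtx n) (v : Vtx n) :
    mono (fun i => Real.exp (t i)) v = chi v (Multiplicative.ofAdd t) := by
  unfold mono chi
  simp only [MonoidHom.coe_mk, OneHom.coe_mk, toAdd_ofAdd]
  rw [Real.exp_sum]
  apply Finset.prod_congr rfl
  intro i _
  rw [Real.rpow_def_of_pos (Real.exp_pos _), Real.log_exp]

/-- Linear independence of monomials (scalar coefficients). -/
lemma mono_li (S : Finset (Vtx n)) (a : Vtx n → ℝ)
    (h : ∀ x : Vtx n, Pos x → ∑ v ∈ S, mono x v * a v = 0) :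
    ∀ v ∈ S, a v = 0 := by
  have li : LinearIndependent ℝ
      (fun i : {v // v ∈ S} => ((chi (i : Vtx n) : Multiplicative (Vtx n) → ℝ))) :=
    (linearIndependent_monoidHom (Multiplicative (Vtx n)) ℝ).comp
      (fun i : {v // v ∈ S} => chi (i : Vtx n))
      (chi_injective.comp Subtype.val_injective)
  have hzero : ∑ i : {v // v ∈ S}, a (i : Vtx n) •
      ((chi (i : Vtx n) : Multiplicative (Vtx n) → ℝ)) = 0 := by
    funext m
    have hx : Pos (fun i => Real.exp ((Multiplicative.toAdd m) i)) :=
      fun i => Real.exp_pos _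
    have := h _ hx
    simp only [Finset.sum_apply, Pi.smul_apply, smul_eq_mul, Pi.zero_apply]
    rw [Finset.sum_coe_sort S (fun v => a v * chi v m)]
    rw [← this]
    apply Finset.sum_congr rfl
    intro v _
    rw [mono_eq_chi, ofAdd_toAdd]
    ring
  intro v hv
  exact Fintype.linearIndependent_iff.mp li (fun i => a (i : Vtx n)) hzero ⟨v, hv⟩

lemma netOut_of_not_source {G : Net n} {k : Vtx n × Vtx n → ℝ} {v : Vtx n}
    (h : v ∉ sources G) : netOut G k v = 0 := by
  unfold sources at h
  unfold netOut
  rw [Finset.filter_eq_empty_iff.mpr, Finset.sum_empty]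
  intro e he heq
  exact h (heq ▸ Finset.mem_image_of_mem Prod.fst he)

lemma maf_eq_sum (G : Net n) (k : Vtx n × Vtx n → ℝ) (S : Finset (Vtx n))
    (hS : sources G ⊆ S) (x : Vtx n) :
    maf G k x = ∑ v ∈ S, mono x v • netOut G k v := by
  unfold maf netOut
  rw [← Finset.sum_fiberwise_of_maps_to (g := Prod.fst)
      (fun e he => hS (Finset.mem_image_of_mem Prod.fst he))]
  apply Finset.sum_congr rfl
  intro v _
  rw [Finset.smul_sum]
  apply Finset.sum_congr rfl
  intro e he
  rw [(Finset.mem_filter.mp he).2, smul_smul, mul_comm]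

/-- Dynamical equivalence is equivalent to equality of all `netOut`s. -/
lemma dynEquiv_iff_netOut (G G' : Net n) (k k' : Vtx n × Vtx n → ℝ) :
    DynEquiv G k G' k' ↔ ∀ w, netOut G k w = netOut G' k' w := by
  constructor
  · intro h w
    by_cases hw : w ∈ sources G ∪ sources G'
    · set S := sources G ∪ sources G' with hSdef
      have key : ∀ v ∈ S, (fun v => netOut G k v - netOut G' k' v) v = 0 := by
        intro v hv
        funext i
        have hcoord : ∀ x : Vtx n, Pos x →
            ∑ u ∈ S, mono x u * (netOut G k u i - netOut G' k' u i) = 0 := by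
          intro x hx
          have h1 := maf_eq_sum G k S Finset.subset_union_left x
          have h2 := maf_eq_sum G' k' S Finset.subset_union_right x
          have h3 : (∑ u ∈ S, mono x u • netOut G k u)
              - (∑ u ∈ S, mono x u • netOut G' k' u) = 0 := by
            rw [← h1, ← h2, h x hx, sub_self]
          have := congrFun h3 i
          simp only [Pi.sub_apply, Finset.sum_apply, Pi.smul_apply, smul_eq_mul,
            Pi.zero_apply] at this
          rw [← this, ← Finset.sum_sub_distrib]
          apply Finset.sum_congr rfl
          intro u _
          ring
        exact mono_li S (fun u => netOut G k u i - netOut G' k' u i) hcoord v hv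
      have := key w hw
      have := sub_eq_zero.mp this
      exact this
    · rw [Finset.mem_union, not_or] at hw
      rw [netOut_of_not_source hw.1, netOut_of_not_source hw.2]
  · intro h x hx
    rw [maf_eq_sum G k (sources G ∪ sources G') Finset.subset_union_left x,
      maf_eq_sum G' k' (sources G ∪ sources G') Finset.subset_union_right x]
    exact Finset.sum_congr rfl (fun v _ => by rw [h v])

lemma netOut_superset (G H : Net n) (k : Vtx n × Vtx n → ℝ) (hGH : G ⊆ H)
    (h0 : ∀ e, e ∉ G → k e = 0) (w : Vtx n) :
    netOut G k w = ∑ e ∈ H.filter (fun e => e.1 = w), k e • (e.2 - e.1) := by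
  unfold netOut
  apply Finset.sum_subset (Finset.filter_subset_filter _ hGH)
  intro e he hne
  have : e ∉ G := fun h => hne (Finset.mem_filter.mpr ⟨h, (Finset.mem_filter.mp he).2⟩)
  rw [h0 e this, zero_smul]

set_option maxHeartbeats 2000000 in
/-- Elimination of a vertex with zero net outflow from a reversible MAS. -/
lemma eliminate (G' : Net n) (k' : Vtx n × Vtx n → ℝ) (hmas : IsMAS G' k')
    (hrev : Reversible G') (v : Vtx n) (hzero : netOut G' k' v = 0) :
    ∃ (G'' : Net n) (k'' : Vtx n × Vtx n → ℝ), IsMAS G'' k'' ∧ Reversible G'' ∧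
      (∀ w, netOut G'' k'' w = netOut G' k' w) ∧ verts G'' ⊆ (verts G').erase v := by
  classical
  set Nv : Finset (Vtx n) :=
    (G'.filter (fun e => e.1 = v ∧ e.2 ≠ v)).image Prod.snd with hNvdef
  have hNv_mem : ∀ u, u ∈ Nv ↔ (v, u) ∈ G' ∧ u ≠ v := by
    intro u
    simp only [hNvdef, Finset.mem_image, Finset.mem_filter]
    constructor
    · rintro ⟨e, ⟨heG, he1, he2⟩, rfl⟩
      exact ⟨by rwa [← he1, Prod.mk.eta], he2⟩
    · rintro ⟨h1, h2⟩
      exact ⟨(v, u), ⟨h1, rfl, h2⟩, rfl⟩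
  have hNv_rev : ∀ u ∈ Nv, (u, v) ∈ G' := by
    intro u hu
    exact hrev (v, u) ((hNv_mem u).mp hu).1
  -- the balance relation at v
  have hbal : ∑ u ∈ Nv, k' (v, u) • (u - v) = 0 := by
    rw [← hzero]
    unfold netOut
    rw [show (∑ e ∈ G'.filter (fun e => e.1 = v), k' e • (e.2 - e.1))
        = ∑ e ∈ G'.filter (fun e => e.1 = v ∧ e.2 ≠ v), k' e • (e.2 - e.1) from ?_]
    · rw [Finset.sum_image]
      · apply Finset.sum_congr rfl
        intro e he
        obtain ⟨-, he1, -⟩ := Finset.mem_filter.mp he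
        rw [show ((v : Vtx n), e.2) = e from by rw [← he1, Prod.mk.eta], he1]
      · intro e he f hf hef
        obtain ⟨-, he1, -⟩ := Finset.mem_filter.mp he
        obtain ⟨-, hf1, -⟩ := Finset.mem_filter.mp hf
        exact Prod.ext (he1.trans hf1.symm) hef
    · symm
      apply Finset.sum_subset
      · intro e he
        obtain ⟨h1, h2, -⟩ := Finset.mem_filter.mp he
        exact Finset.mem_filter.mpr ⟨h1, h2⟩
      · intro e he hne
        obtain ⟨heG, he1⟩ := Finset.mem_filter.mp he
        have he2 : e.2 = v := by
          by_contra hc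
          exact hne (Finset.mem_filter.mpr ⟨heG, he1, hc⟩)
        rw [he2, ← he1, sub_self, smul_zero]
  by_cases hNvne : Nv = ∅
  · -- all edges at v are the self-loop (v,v); remove it
    set kL : Vtx n × Vtx n → ℝ := fun e => if e = (v, v) then 0 else k' e with hkL
    have hmasL : IsMAS (G'.erase (v, v)) kL := by
      constructor
      · intro e he
        obtain ⟨hne, heG⟩ := Finset.mem_erase.mp he
        simp only [hkL, if_neg hne]
        exact hmas.1 e heG
      · intro e he
        by_cases h : e = (v, v)
        · simp only [hkL, if_pos h]
        · simp only [hkL, if_neg h]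
          exact hmas.2 e (fun hc => he (Finset.mem_erase.mpr ⟨h, hc⟩))
    have hedge : ∀ e ∈ G', e.1 = v ∨ e.2 = v → e = (v, v) := by
      have key : ∀ f ∈ G', f.1 = v → f.2 = v := by
        intro f hf h1
        by_contra hc
        have : f.2 ∈ Nv := (hNv_mem f.2).mpr ⟨by rwa [← h1, Prod.mk.eta], hc⟩
        simp [hNvne] at this
      intro e heG hor
      rcases hor with h1 | h2
      · exact Prod.ext h1 (key e heG h1)
      · exact Prod.ext (key (e.2, e.1) (hrev e heG) h2) h2
    refine ⟨G'.erase (v, v), kL, hmasL, ?_, ?_, ?_⟩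
    · intro e he
      obtain ⟨hne, heG⟩ := Finset.mem_erase.mp he
      refine Finset.mem_erase.mpr ⟨?_, hrev e heG⟩
      intro hc
      exact hne (Prod.ext (congrArg Prod.snd hc) (congrArg Prod.fst hc))
    · intro w
      rw [netOut_superset (G'.erase (v, v)) G' kL (Finset.erase_subset _ _) hmasL.2 w]
      unfold netOut
      apply Finset.sum_congr rfl
      intro e he
      by_cases h : e = (v, v)
      · subst h; simp [hkL]
      · simp only [hkL, if_neg h]
    · intro u hu
      unfold verts at hu ⊢
      rw [Finset.mem_union] at hu
      have hex : ∃ e ∈ G'.erase (v, v), e.1 = u ∨ e.2 = u := by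
        rcases hu with h | h
        · obtain ⟨e, he, rfl⟩ := Finset.mem_image.mp h; exact ⟨e, he, Or.inl rfl⟩
        · obtain ⟨e, he, rfl⟩ := Finset.mem_image.mp h; exact ⟨e, he, Or.inr rfl⟩
      obtain ⟨e, he, hor⟩ := hex
      obtain ⟨hne, heG⟩ := Finset.mem_erase.mp he
      refine Finset.mem_erase.mpr ⟨?_, ?_⟩
      · intro hc
        subst hc
        exact hne (hedge e heG hor)
      · rw [Finset.mem_union]
        rcases hor with h | h
        · exact Or.inl (Finset.mem_image.mpr ⟨e, heG, h⟩)
        · exact Or.inr (Finset.mem_image.mpr ⟨e, heG, h⟩)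
  · -- main case: Nv nonempty
    have hNvpos : Nv.Nonempty := Finset.nonempty_of_ne_empty hNvne
    set K : ℝ := ∑ u ∈ Nv, k' (v, u) with hKdef
    have hK : 0 < K := by
      apply Finset.sum_pos
      · intro u hu; exact hmas.1 _ ((hNv_mem u).mp hu).1
      · exact hNvpos
    set B : Vtx n × Vtx n → ℝ :=
      fun e => if e ∈ Nv ×ˢ Nv then (k' (e.1, v) / K) * k' (v, e.2) else 0 with hBdef
    set A : Vtx n × Vtx n → ℝ :=
      fun e => if e.1 ≠ v ∧ e.2 ≠ v then k' e else 0 with hAdef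
    set G'' : Net n := G'.filter (fun e => e.1 ≠ v ∧ e.2 ≠ v) ∪ Nv ×ˢ Nv with hG''def
    set k'' : Vtx n × Vtx n → ℝ := fun e => A e + B e with hk''def
    have hA_nonneg : ∀ e, 0 ≤ A e := by
      intro e
      simp only [hAdef]
      split
      · rcases hmas with ⟨h1, h2⟩
        by_cases h : e ∈ G'
        · exact (h1 e h).le
        · rw [h2 e h]
      · rfl
    have hB_nonneg : ∀ e, 0 ≤ B e := by
      intro e
      simp only [hBdef]
      split
      · rename_i h
        rw [Finset.mem_product] at h
        have h1 := hmas.1 _ (hNv_rev _ h.1)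
        have h2 := hmas.1 _ ((hNv_mem e.2).mp h.2).1
        positivity
      · rfl
    have hmas'' : IsMAS G'' k'' := by
      constructor
      · intro e he
        rw [hG''def, Finset.mem_union] at he
        rcases he with h | h
        · obtain ⟨heG, hc⟩ := Finset.mem_filter.mp h
          have : 0 < A e := by simp only [hAdef, if_pos hc]; exact hmas.1 e heG
          have := hB_nonneg e
          simp only [hk''def]; linarith
        · have : 0 < B e := by
            simp only [hBdef, if_pos h]
            rw [Finset.mem_product] at h
            have h1 := hmas.1 _ (hNv_rev _ h.1)
            have h2 := hmas.1 _ ((hNv_mem e.2).mp h.2).1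
            positivity
          have := hA_nonneg e
          simp only [hk''def]; linarith
      · intro e he
        rw [hG''def, Finset.mem_union, not_or] at he
        obtain ⟨h1, h2⟩ := he
        simp only [hk''def, hAdef, hBdef, if_neg h2]
        rw [add_zero]
        split
        · rename_i hc
          apply hmas.2
          intro hG
          exact h1 (Finset.mem_filter.mpr ⟨hG, hc⟩)
        · rfl
    have hrev'' : Reversible G'' := by
      intro e he
      rw [hG''def, Finset.mem_union] at he ⊢
      rcases he with h | h
      · obtain ⟨heG, hc1, hc2⟩ := Finset.mem_filter.mp h
        exact Or.inl (Finset.mem_filter.mpr ⟨hrev e heG, hc2, hc1⟩)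
      · rw [Finset.mem_product] at h
        exact Or.inr (Finset.mem_product.mpr ⟨h.2, h.1⟩)
    have hG''_no_v : ∀ e ∈ G'', e.1 ≠ v ∧ e.2 ≠ v := by
      intro e he
      rw [hG''def, Finset.mem_union] at he
      rcases he with h | h
      · exact (Finset.mem_filter.mp h).2
      · rw [Finset.mem_product] at h
        exact ⟨((hNv_mem e.1).mp h.1).2, ((hNv_mem e.2).mp h.2).2⟩
    refine ⟨G'', k'', hmas'', hrev'', ?_, ?_⟩
    · -- netOut equality
      intro w
      by_cases hwv : w = v
      · subst hwv
        rw [hzero]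
        unfold netOut
        rw [Finset.filter_eq_empty_iff.mpr, Finset.sum_empty]
        intro e he
        exact (hG''_no_v e he).1
      · -- w ≠ v
        set H : Net n := (G' ∪ G'') ∪ {(w, v)} with hHdef
        have hG'H : G' ⊆ H := fun e he =>
          Finset.mem_union.mpr (Or.inl (Finset.mem_union.mpr (Or.inl he)))
        have hG''H : G'' ⊆ H := fun e he =>
          Finset.mem_union.mpr (Or.inl (Finset.mem_union.mpr (Or.inr he)))
        have hwvH : (w, v) ∈ H := Finset.mem_union.mpr (Or.inr (Finset.mem_singleton_self _))
        rw [netOut_superset G'' H k'' hG''H hmas''.2 w,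
          netOut_superset G' H k' hG'H hmas.2 w]
        set T := H.filter (fun e => e.1 = w) with hTdef
        rw [← sub_eq_zero, ← Finset.sum_sub_distrib]
        have hsplit : ∀ e ∈ T, k'' e • (e.2 - e.1) - k' e • (e.2 - e.1)
            = B e • (e.2 - e.1) - (if e.2 = v then k' e else 0) • (e.2 - e.1) := by
          intro e he
          have he1 : e.1 = w := (Finset.mem_filter.mp he).2
          have hA : A e = k' e - (if e.2 = v then k' e else 0) := by
            simp only [hAdef]
            by_cases h2 : e.2 = v
            · rw [if_pos h2, if_neg]
              · ring
              · rintro ⟨-, hc⟩; exact hc h2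
            · rw [if_neg h2, if_pos ⟨by rw [he1]; exact hwv, h2⟩]
              ring
          simp only [hk''def]
          rw [hA]
          module
        rw [Finset.sum_congr rfl hsplit, Finset.sum_sub_distrib]
        have hS2 : ∑ e ∈ T, (if e.2 = v then k' e else 0) • (e.2 - e.1)
            = k' (w, v) • (v - w) := by
          have hT : ((w, v) : Vtx n × Vtx n) ∈ T := Finset.mem_filter.mpr ⟨hwvH, rfl⟩
          have hterm : ∀ e ∈ T, (if e.2 = v then k' e else 0) • (e.2 - e.1)
              = if e = (w, v) then k' (w, v) • (v - w) else 0 := by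
            intro e he
            have he1 : e.1 = w := (Finset.mem_filter.mp he).2
            by_cases h : e = (w, v)
            · subst h
              simp
            · rw [if_neg h, if_neg, zero_smul]
              intro h2
              exact h (Prod.ext he1 h2)
          rw [Finset.sum_congr rfl hterm,
            Finset.sum_ite_eq' T ((w, v) : Vtx n × Vtx n) (fun _ => k' (w, v) • (v - w)),
            if_pos hT]
        rw [hS2]
        by_cases hwNv : w ∈ Nv
        · have hS1 : ∑ e ∈ T, B e • (e.2 - e.1) = k' (w, v) • (v - w) := by
            have hsub : ({w} ×ˢ Nv : Net n) ⊆ T := by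
              intro e he
              rw [Finset.mem_product, Finset.mem_singleton] at he
              refine Finset.mem_filter.mpr ⟨?_, he.1⟩
              apply hG''H
              rw [hG''def, Finset.mem_union]
              exact Or.inr (Finset.mem_product.mpr ⟨by rw [he.1]; exact hwNv, he.2⟩)
            rw [← Finset.sum_subset hsub ?_]
            · rw [Finset.sum_product, Finset.sum_singleton]
              have : ∀ u ∈ Nv, B (w, u) • (u - w)
                  = (k' (w, v) / K) • (k' (v, u) • (u - w)) := by
                intro u hu
                have hmem : ((w, u) : Vtx n × Vtx n) ∈ Nv ×ˢ Nv :=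
                  Finset.mem_product.mpr ⟨hwNv, hu⟩
                have hB' : B (w, u) = k' (w, v) / K * k' (v, u) := by
                  show (if ((w, u) : Vtx n × Vtx n) ∈ Nv ×ˢ Nv
                    then k' (((w, u) : Vtx n × Vtx n).1, v) / K * k' (v, ((w, u) : Vtx n × Vtx n).2)
                    else 0) = _
                  rw [if_pos hmem]
                rw [hB', mul_smul]
              rw [Finset.sum_congr rfl this, ← Finset.smul_sum]
              have hkey : ∑ u ∈ Nv, k' (v, u) • (u - w) = K • (v - w) := by
                have : ∀ u ∈ Nv, k' (v, u) • (u - w)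
                    = k' (v, u) • (u - v) + k' (v, u) • (v - w) := by
                  intro u hu
                  module
                rw [Finset.sum_congr rfl this, Finset.sum_add_distrib, hbal, zero_add,
                  ← Finset.sum_smul]
              rw [hkey, smul_smul, div_mul_cancel₀ _ (ne_of_gt hK)]
            · intro e he hne
              have he1 : e.1 = w := (Finset.mem_filter.mp he).2
              have : B e = 0 := by
                simp only [hBdef]
                rw [if_neg]
                intro hc
                rw [Finset.mem_product] at hc
                exact hne (Finset.mem_product.mpr
                  ⟨Finset.mem_singleton.mpr he1, hc.2⟩)
              rw [this, zero_smul]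
          rw [hS1, sub_self]
        · have hS1 : ∑ e ∈ T, B e • (e.2 - e.1) = 0 := by
            apply Finset.sum_eq_zero
            intro e he
            have he1 : e.1 = w := (Finset.mem_filter.mp he).2
            have : B e = 0 := by
              simp only [hBdef]
              rw [if_neg]
              intro hc
              rw [Finset.mem_product] at hc
              exact hwNv (he1 ▸ hc.1)
            rw [this, zero_smul]
          have hkwv : k' (w, v) = 0 := by
            apply hmas.2
            intro hc
            have := hrev _ hc
            exact hwNv ((hNv_mem w).mpr ⟨this, hwv⟩)
          rw [hS1, hkwv]
          simp
    · -- verts G'' ⊆ (verts G').erase v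
      intro u hu
      unfold verts at hu
      rw [Finset.mem_union] at hu
      have : ∃ e ∈ G'', e.1 = u ∨ e.2 = u := by
        rcases hu with h | h
        · obtain ⟨e, he, rfl⟩ := Finset.mem_image.mp h
          exact ⟨e, he, Or.inl rfl⟩
        · obtain ⟨e, he, rfl⟩ := Finset.mem_image.mp h
          exact ⟨e, he, Or.inr rfl⟩
      obtain ⟨e, he, hor⟩ := this
      have hnov := hG''_no_v e he
      have heG' : e.1 ∈ verts G' ∧ e.2 ∈ verts G' := by
        rw [hG''def, Finset.mem_union] at he
        rcases he with h | h
        · have heG := (Finset.mem_filter.mp h).1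
          exact ⟨Finset.mem_union.mpr (Or.inl (Finset.mem_image.mpr ⟨e, heG, rfl⟩)),
            Finset.mem_union.mpr (Or.inr (Finset.mem_image.mpr ⟨e, heG, rfl⟩))⟩
        · rw [Finset.mem_product] at h
          have h1 := ((hNv_mem e.1).mp h.1).1
          have h2 := ((hNv_mem e.2).mp h.2).1
          exact ⟨Finset.mem_union.mpr (Or.inr (Finset.mem_image.mpr ⟨(v, e.1), h1, rfl⟩)),
            Finset.mem_union.mpr (Or.inr (Finset.mem_image.mpr ⟨(v, e.2), h2, rfl⟩))⟩
      rcases hor with h | h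
      · exact Finset.mem_erase.mpr ⟨h ▸ hnov.1, h ▸ heG'.1⟩
      · exact Finset.mem_erase.mpr ⟨h ▸ hnov.2, h ▸ heG'.2⟩

/-- Iterated elimination. -/
lemma reduce (G : Net n) (k : Vtx n × Vtx n → ℝ) :
    ∀ m : ℕ, ∀ (G' : Net n) (k' : Vtx n × Vtx n → ℝ), IsMAS G' k' → Reversible G' →
      (∀ w, netOut G' k' w = netOut G k w) → ((verts G') \ sources G).card ≤ m →
      ∃ (G'' : Net n) (k'' : Vtx n × Vtx n → ℝ), IsMAS G'' k'' ∧ Reversible G'' ∧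
        (∀ w, netOut G'' k'' w = netOut G k w) ∧ verts G'' ⊆ sources G := by
  intro m
  induction m with
  | zero =>
    intro G' k' hmas hrev hE hcard
    refine ⟨G', k', hmas, hrev, hE, ?_⟩
    have : (verts G') \ sources G = ∅ := Finset.card_eq_zero.mp (Nat.le_zero.mp hcard)
    exact (Finset.sdiff_eq_empty_iff_subset.mp this)
  | succ m ih =>
    intro G' k' hmas hrev hE hcard
    by_cases hempty : (verts G') \ sources G = ∅
    · exact ⟨G', k', hmas, hrev, hE, Finset.sdiff_eq_empty_iff_subset.mp hempty⟩
    · obtain ⟨v, hv⟩ := Finset.nonempty_of_ne_empty hempty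
      obtain ⟨hvG', hvS⟩ := Finset.mem_sdiff.mp hv
      have hzero : netOut G' k' v = 0 := by
        rw [hE v]
        exact netOut_of_not_source hvS
      obtain ⟨G'', k'', hmas'', hrev'', hE'', hsub''⟩ :=
        eliminate G' k' hmas hrev v hzero
      apply ih G'' k'' hmas'' hrev'' (fun w => (hE'' w).trans (hE w))
      have hsub : (verts G'') \ sources G ⊆ ((verts G') \ sources G).erase v := by
        intro u hu
        obtain ⟨h1, h2⟩ := Finset.mem_sdiff.mp hu
        have := hsub'' h1
        obtain ⟨hne, hmem⟩ := Finset.mem_erase.mp this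
        exact Finset.mem_erase.mpr ⟨hne, Finset.mem_sdiff.mpr ⟨hmem, h2⟩⟩
      calc ((verts G'') \ sources G).card ≤ (((verts G') \ sources G).erase v).card :=
            Finset.card_le_card hsub
        _ = ((verts G') \ sources G).card - 1 := Finset.card_erase_of_mem hv
        _ ≤ m := by omega


theorem stmt17 (G : Net n) (k : Vtx n × Vtx n → ℝ) (hk : IsMAS G k) :
    (∃ (G' : Net n) (k' : Vtx n × Vtx n → ℝ),
      IsMAS G' k' ∧ DynEquiv G k G' k' ∧ Reversible G') ↔
    (∃ (G' : Net n) (k' : Vtx n × Vtx n → ℝ),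
      IsMAS G' k' ∧ DynEquiv G k G' k' ∧ Reversible G' ∧
        verts G' ⊆ sources G) := by
  constructor
  · rintro ⟨G', k', hmas', hdyn, hrev'⟩
    have hE : ∀ w, netOut G' k' w = netOut G k w := by
      intro w
      exact ((dynEquiv_iff_netOut G G' k k').mp hdyn w).symm
    obtain ⟨G'', k'', hmas'', hrev'', hE'', hsub''⟩ :=
      reduce G k ((verts G') \ sources G).card G' k' hmas' hrev' hE le_rfl
    exact ⟨G'', k'', hmas'',
      (dynEquiv_iff_netOut G G'' k k'').mpr (fun w => (hE'' w).symm), hrev'', hsub''⟩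
  · rintro ⟨G', k', hmas', hdyn, hrev', -⟩
    exact ⟨G', k', hmas', hdyn, hrev'⟩
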